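/- arXiv:2401.15556 — 4 statements merged into one kernel-verified Lean document; each statement's English description precedes it below -/
import Mathlib

section
/- Let p, q ∈ [1, ∞) and let A_p = {v ∈ ℓ_p : v(n) ∈ 2^{-n}ℤ for all n}, a closed additive subgroup of ℓ_p. If there exists an injective additive map from the group X = {(t_j) ∈ ℝ^ω : t_j ∈ 2^{-j}ℤ for all j} into sequences satisfying: for all (t_j) ∈ X, (t_j) ∈ ℓ_p ⟺ (t_j) ∈ ℓ_q, then p = q. -/
open Filter Topology


lemma nat_two_mul_le_two_pow : ∀ n : ℕ, 1 ≤ n → 2 * n ≤ 2 ^ n := by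
  intro n hn
  induction n with
  | zero => omega
  | succ m ih =>
    rcases Nat.eq_zero_or_pos m with hm | hm
    · subst hm; norm_num
    · have h1 := ih hm
      have h2 : 2 ≤ 2 ^ m := by
        calc 2 ≤ 2 * m := by omega
        _ ≤ 2 ^ m := h1
      calc 2 * (m + 1) = 2 * m + 2 := by ring
      _ ≤ 2 ^ m + 2 ^ m := by omega
      _ = 2 ^ (m + 1) := by ring

lemma key {p q : ℝ} (hp : 1 ≤ p) (hpq : p < q) :
    ∃ t : ℕ → ℝ, (∀ j : ℕ, ∃ k : ℤ, t j = (2 : ℝ) ^ (-(j : ℤ)) * k) ∧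
      Summable (fun j => |t j| ^ q) ∧ ¬ Summable (fun j => |t j| ^ p) := by
  have hp0 : (0:ℝ) < p := lt_of_lt_of_le one_pos hp
  have hq0 : (0:ℝ) < q := hp0.trans hpq
  set a : ℕ → ℝ := fun j => (j:ℝ) ^ (-(1/p)) with ha
  have ha0 : ∀ j, 0 ≤ a j := fun j => Real.rpow_nonneg (Nat.cast_nonneg j) _
  set t : ℕ → ℝ := fun j => (2:ℝ)^(-(j:ℤ)) * (⌊(2:ℝ)^(j:ℤ) * a j⌋ : ℤ) with ht
  have hb : ∀ j : ℕ, (0:ℝ) < (2:ℝ)^(j:ℤ) := fun j => zpow_pos two_pos _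
  have hbinv : ∀ j : ℕ, (2:ℝ)^(-(j:ℤ)) = ((2:ℝ)^(j:ℤ))⁻¹ := fun j => zpow_neg 2 _
  have ht_nonneg : ∀ j, 0 ≤ t j := by
    intro j
    apply mul_nonneg (le_of_lt (by rw [hbinv]; exact inv_pos.2 (hb j)))
    exact_mod_cast Int.floor_nonneg.2 (mul_nonneg (hb j).le (ha0 j))
  have ht_le : ∀ j, t j ≤ a j := by
    intro j
    show (2:ℝ)^(-(j:ℤ)) * (⌊(2:ℝ)^(j:ℤ) * a j⌋ : ℤ) ≤ a j
    rw [hbinv, inv_mul_le_iff₀ (hb j), mul_comm]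
    exact Int.floor_le _
  have ht_ge : ∀ j, a j - (2:ℝ)^(-(j:ℤ)) ≤ t j := by
    intro j
    have h1 : (2:ℝ)^(j:ℤ) * a j - 1 ≤ (⌊(2:ℝ)^(j:ℤ) * a j⌋ : ℝ) := (Int.sub_one_lt_floor _).le
    have h2 := mul_le_mul_of_nonneg_left h1 (le_of_lt (inv_pos.2 (hb j)))
    show a j - (2:ℝ)^(-(j:ℤ)) ≤ (2:ℝ)^(-(j:ℤ)) * (⌊(2:ℝ)^(j:ℤ) * a j⌋ : ℤ)
    rw [hbinv]
    calc a j - ((2:ℝ)^(j:ℤ))⁻¹ = ((2:ℝ)^(j:ℤ))⁻¹ * ((2:ℝ)^(j:ℤ) * a j - 1) := by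
          field_simp
    _ ≤ _ := h2
  have haq : ∀ j : ℕ, (a j) ^ q = (j:ℝ) ^ (-(q/p)) := by
    intro j
    show ((j:ℝ) ^ (-(1/p))) ^ q = (j:ℝ) ^ (-(q/p))
    rw [← Real.rpow_mul (Nat.cast_nonneg j)]
    congr 1
    field_simp
  refine ⟨t, fun j => ⟨_, rfl⟩, ?_, ?_⟩
  · -- summable q
    have hf : Summable (fun j : ℕ => (j:ℝ) ^ (-(q/p))) := by
      rw [Real.summable_nat_rpow]
      have : 1 < q / p := (one_lt_div hp0).2 hpq
      linarith
    refine Summable.of_nonneg_of_le (fun j => Real.rpow_nonneg (abs_nonneg _) q)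
      (fun j => ?_) hf
    have : |t j| ^ q ≤ (a j) ^ q := by
      rw [abs_of_nonneg (ht_nonneg j)]
      exact Real.rpow_le_rpow (ht_nonneg j) (ht_le j) hq0.le
    exact this.trans (le_of_eq (haq j))
  · -- not summable p
    intro hs
    have key2 : ∀ j : ℕ, a (j+1) / 2 ≤ |t (j+1)| := by
      intro j
      set n := j + 1 with hn
      have hn1 : (1:ℝ) ≤ (n:ℝ) := by exact_mod_cast Nat.one_le_iff_ne_zero.2 (by omega)
      have hstep : (2:ℝ)^(-(n:ℤ)) ≤ a n / 2 := by
        have h2n : (2:ℝ) * n ≤ 2 ^ (n:ℕ) := by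
          exact_mod_cast nat_two_mul_le_two_pow n (by omega)
        have hpos : (0:ℝ) < 2 * n := by linarith
        have hinv : ((2:ℝ) ^ (n:ℕ))⁻¹ ≤ (2 * (n:ℝ))⁻¹ :=
          inv_anti₀ hpos h2n
        have hninv : ((n:ℝ))⁻¹ ≤ a n := by
          rw [ha]
          have : ((n:ℝ))⁻¹ = (n:ℝ) ^ (-1 : ℝ) := by
            rw [Real.rpow_neg_one]
          rw [this]
          apply Real.rpow_le_rpow_of_exponent_le hn1
          have : 1/p ≤ 1 := by
            rw [div_le_one hp0]; exact hp
          linarith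
        calc (2:ℝ)^(-(n:ℤ)) = ((2:ℝ) ^ (n:ℕ))⁻¹ := by
              rw [hbinv n, zpow_natCast]
        _ ≤ (2 * (n:ℝ))⁻¹ := hinv
        _ = ((n:ℝ))⁻¹ / 2 := by rw [mul_comm, mul_inv]; ring
        _ ≤ a n / 2 := by linarith
      have : a n / 2 ≤ t n := by
        have := ht_ge n
        linarith
      rw [abs_of_nonneg (ht_nonneg n)]
      exact this
    have hs1 : Summable (fun j : ℕ => |t (j+1)| ^ p) := (summable_nat_add_iff 1).2 hs
    have hs2 : Summable (fun j : ℕ => (a (j+1) / 2) ^ p) := by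
      refine Summable.of_nonneg_of_le (fun j => Real.rpow_nonneg (by positivity) p)
        (fun j => Real.rpow_le_rpow (by positivity) (key2 j) hp0.le) hs1
    have hap : ∀ n : ℕ, (a n / 2) ^ p = (n:ℝ) ^ (-1:ℝ) / 2 ^ p := by
      intro n
      rw [Real.div_rpow (ha0 n) (by norm_num), ha]
      congr 1
      rw [← Real.rpow_mul (Nat.cast_nonneg n)]
      congr 1
      field_simp
    have hs3 : Summable (fun j : ℕ => ((j+1:ℕ):ℝ) ^ (-1:ℝ)) := by
      have := hs2.mul_left ((2:ℝ)^p)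
      have h2p : ((2:ℝ)^p) ≠ 0 := (Real.rpow_pos_of_pos two_pos p).ne'
      refine this.congr fun j => ?_
      rw [hap (j+1)]
      field_simp
    have hs4 : Summable (fun n : ℕ => (n:ℝ) ^ (-1:ℝ)) := (summable_nat_add_iff 1).1 hs3
    rw [Real.summable_nat_rpow] at hs4
    linarith


/-- If for every sequence `(t_j)` with `t_j ∈ 2⁻ʲ·ℤ` for all `j`, the summability of
`|t_j|^p` is equivalent to the summability of `|t_j|^q` (with `p, q ∈ [1, ∞)`),
then `p = q`. -/
theorem stmt_15 (p q : ℝ) (hp : 1 ≤ p) (hq : 1 ≤ q)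
    (h : ∀ t : ℕ → ℝ, (∀ j : ℕ, ∃ k : ℤ, t j = (2 : ℝ) ^ (-(j : ℤ)) * k) →
      (Summable (fun j => |t j| ^ p) ↔ Summable (fun j => |t j| ^ q))) :
    p = q := by
  rcases lt_trichotomy p q with hlt | heq | hgt
  · obtain ⟨t, hmem, hsq, hsp⟩ := key hp hlt
    exact absurd ((h t hmem).2 hsq) hsp
  · exact heq
  · obtain ⟨t, hmem, hsp, hsq⟩ := key hq hgt
    exact absurd ((h t hmem).1 hsp) hsq
end

section
/- For p ∈ [1, ∞) and a ∈ c_0 with infinite support I_a = {n : a(n) ≠ 0}, the group A_{p,a} = {v ∈ ℓ_p : v(n) ∈ a(n)ℤ for all n} with the topology inherited from ℓ_p is a totally disconnected Polish group that is not non-archimedean. -/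
open Filter Topology

/-- The subgroup `A_{p,a} = {v ∈ ℓ_p : ∀ n, v n ∈ a n · ℤ}` of `ℓ_p`. -/
noncomputable def A (p : ENNReal) [Fact (1 ≤ p)] (a : ℕ → ℝ) :
    AddSubgroup (lp (fun _ : ℕ => ℝ) p) where
  carrier := {v | ∀ n : ℕ, ∃ k : ℤ, (v : ∀ _ : ℕ, ℝ) n = a n * k}
  zero_mem' := by
    intro n
    exact ⟨0, by simp⟩
  add_mem' := by
    rintro v w hv hw n
    obtain ⟨k1, h1⟩ := hv n
    obtain ⟨k2, h2⟩ := hw n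
    exact ⟨k1 + k2, by
      change (v : ∀ _ : ℕ, ℝ) n + (w : ∀ _ : ℕ, ℝ) n = _
      rw [h1, h2]; push_cast; ring⟩
  neg_mem' := by
    rintro v hv n
    obtain ⟨k, h1⟩ := hv n
    exact ⟨-k, by
      change -(v : ∀ _ : ℕ, ℝ) n = _
      rw [h1]; push_cast; ring⟩

/-- An additive topological group is non-archimedean if it has a neighborhood basis of `0`
consisting of open subgroups. -/
def NonArchimedeanAdd (G : Type*) [AddGroup G] [TopologicalSpace G] : Prop :=
  ∀ U ∈ 𝓝 (0 : G), ∃ K : AddSubgroup G, IsOpen (K : Set G) ∧ (K : Set G) ⊆ U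

section Aux

variable {p : ENNReal} [Fact (1 ≤ p)]

private lemma hp_toReal_pos (hp : p ≠ ⊤) : 0 < p.toReal :=
  ENNReal.toReal_pos (zero_lt_one.trans_le Fact.out).ne' hp

/-- The set `c ℤ` is closed in `ℝ`. -/
private lemma isClosed_zmul (c : ℝ) : IsClosed {x : ℝ | ∃ k : ℤ, x = c * k} := by
  rcases eq_or_ne c 0 with rfl | hc
  · have : {x : ℝ | ∃ k : ℤ, x = 0 * (k : ℝ)} = {(0 : ℝ)} := by
      ext x; simp
    rw [this]
    exact isClosed_singleton
  · have h1 : IsClosed (Set.range ((↑) : ℤ → ℝ)) :=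
      Int.isClosedEmbedding_coe_real.isClosed_range
    have h2 : {x : ℝ | ∃ k : ℤ, x = c * k} =
        (fun x : ℝ => x / c) ⁻¹' Set.range ((↑) : ℤ → ℝ) := by
      ext x
      constructor
      · rintro ⟨k, rfl⟩
        exact ⟨k, by field_simp⟩
      · rintro ⟨k, hk⟩
        refine ⟨k, ?_⟩
        have hk' : (k : ℝ) = x / c := hk
        rw [eq_div_iff hc] at hk'
        linarith
    rw [h2]
    exact h1.preimage (continuous_id.div_const c)

private lemma lp_single_sub (i : ℕ) (x y : ℝ) :
    lp.single (E := fun _ : ℕ => ℝ) p i x - lp.single (E := fun _ : ℕ => ℝ) p i y = lp.single (E := fun _ : ℕ => ℝ) p i (x - y) := by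
  apply lp.ext
  funext j
  rcases eq_or_ne j i with rfl | hj
  · simp [lp.coeFn_sub, lp.single_apply_self]
  · simp [lp.coeFn_sub, lp.single_apply_ne p i _ hj]

/-- `ℓ_p` over `ℕ` with real coefficients is separable for `p ≠ ∞`. -/
private lemma separable_lp (hp : p ≠ ⊤) :
    TopologicalSpace.SeparableSpace (lp (fun _ : ℕ => ℝ) p) := by
  classical
  have hp' : 0 < p.toReal := hp_toReal_pos hp
  set F : (Σ n : ℕ, Fin n → ℚ) → lp (fun _ : ℕ => ℝ) p :=
    fun x => ∑ i : Fin x.1, lp.single (E := fun _ : ℕ => ℝ) p (i : ℕ) ((x.2 i : ℝ)) with hFdef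
  refine ⟨⟨Set.range F, Set.countable_range F, ?_⟩⟩
  rw [Metric.dense_iff]
  intro f ε hε
  obtain ⟨N, hN⟩ := (Metric.tendsto_atTop.mp (lp.hasSum_single hp f).tendsto_sum_nat)
    (ε / 2) (by positivity)
  have hN' : dist (∑ i ∈ Finset.range N, lp.single (E := fun _ : ℕ => ℝ) p i ((f : ∀ _ : ℕ, ℝ) i)) f < ε / 2 :=
    hN N le_rfl
  have hq : ∀ i : ℕ, ∃ q : ℚ, |(f : ∀ _ : ℕ, ℝ) i - q| < ε / (2 * (N + 1)) := fun i =>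
    exists_rat_near _ (by positivity)
  choose q hqlt using hq
  refine ⟨F ⟨N, fun i => q i⟩, Metric.mem_ball'.mpr ?_, Set.mem_range_self _⟩
  have key : dist (∑ i ∈ Finset.range N, lp.single (E := fun _ : ℕ => ℝ) p i ((f : ∀ _ : ℕ, ℝ) i))
      (F ⟨N, fun i => q i⟩) ≤ N * (ε / (2 * (N + 1))) := by
    rw [dist_eq_norm, hFdef]
    simp only
    rw [Finset.sum_range (fun i => lp.single (E := fun _ : ℕ => ℝ) p i ((f : ∀ _ : ℕ, ℝ) i)),
      ← Finset.sum_sub_distrib]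
    refine (norm_sum_le _ _).trans ?_
    have hterm : ∀ i : Fin N,
        ‖lp.single (E := fun _ : ℕ => ℝ) p (i : ℕ) ((f : ∀ _ : ℕ, ℝ) i) - lp.single (E := fun _ : ℕ => ℝ) p (i : ℕ) ((q i : ℝ))‖
          ≤ ε / (2 * (N + 1)) := by
      intro i
      rw [lp_single_sub]
      have := lp.norm_single (E := fun _ : ℕ => ℝ) (p := p) (zero_lt_one.trans_le Fact.out)
        (i : ℕ) ((f : ∀ _ : ℕ, ℝ) i - (q i : ℝ))
      rw [this, Real.norm_eq_abs]
      exact (hqlt (i : ℕ)).le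
    calc ∑ i : Fin N,
        ‖lp.single (E := fun _ : ℕ => ℝ) p (i : ℕ) ((f : ∀ _ : ℕ, ℝ) i) - lp.single (E := fun _ : ℕ => ℝ) p (i : ℕ) ((q i : ℝ))‖
        ≤ ∑ _i : Fin N, (ε / (2 * (N + 1))) := Finset.sum_le_sum fun i _ => hterm i
      _ = N * (ε / (2 * (N + 1))) := by simp [Finset.sum_const, mul_comm]
  have hlt : (N : ℝ) * (ε / (2 * (N + 1))) < ε / 2 := by
    have h1 : (N : ℝ) * (ε / (2 * (N + 1))) = ε / 2 * ((N : ℝ) / (N + 1)) := by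
      field_simp
    have h2 : (N : ℝ) / (N + 1) < 1 := by
      rw [div_lt_one (by positivity)]
      linarith
    rw [h1]
    nlinarith [half_pos hε]
  calc dist f (F ⟨N, fun i => q i⟩)
      ≤ dist f (∑ i ∈ Finset.range N, lp.single (E := fun _ : ℕ => ℝ) p i ((f : ∀ _ : ℕ, ℝ) i)) +
        dist (∑ i ∈ Finset.range N, lp.single (E := fun _ : ℕ => ℝ) p i ((f : ∀ _ : ℕ, ℝ) i))
          (F ⟨N, fun i => q i⟩) := dist_triangle _ _ _
    _ < ε / 2 + ε / 2 := by
        refine add_lt_add_of_lt_of_le (by rwa [dist_comm]) (key.trans_lt hlt).le |>.trans_le ?_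
        exact le_rfl
    _ = ε := by ring

private lemma isClosed_A (p : ENNReal) [Fact (1 ≤ p)] (a : ℕ → ℝ) :
    IsClosed ((A p a : Set (lp (fun _ : ℕ => ℝ) p))) := by
  have h : (A p a : Set (lp (fun _ : ℕ => ℝ) p)) =
      ⋂ n : ℕ, (fun v : lp (fun _ : ℕ => ℝ) p => (v : ∀ _ : ℕ, ℝ) n) ⁻¹'
        {x : ℝ | ∃ k : ℤ, x = a n * k} := by
    ext v
    simp only [Set.mem_iInter, Set.mem_preimage, Set.mem_setOf_eq, SetLike.mem_coe]
    exact Iff.rfl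
  rw [h]
  exact isClosed_iInter fun n => (isClosed_zmul (a n)).preimage
    ((continuous_apply n).comp lp.uniformContinuous_coe.continuous)

end Aux

/-- For `1 ≤ p < ∞` and a null sequence `a` with infinite support, the group `A_{p,a}`
with the topology inherited from `ℓ_p` is a totally disconnected Polish group that is
not non-archimedean. -/
theorem stmt_16 (p : ENNReal) [Fact (1 ≤ p)] (hp : p ≠ ⊤)
    (a : ℕ → ℝ) (ha : Tendsto a atTop (𝓝 0)) (hsupp : {n : ℕ | a n ≠ 0}.Infinite) :
    PolishSpace ↥(A p a) ∧
    connectedComponent (0 : ↥(A p a)) = {0} ∧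
    ¬ NonArchimedeanAdd ↥(A p a) := by
  haveI := separable_lp (p := p) hp
  haveI : PolishSpace (lp (fun _ : ℕ => ℝ) p) := inferInstance
  have hpol : PolishSpace ↥(A p a) := (isClosed_A p a).polishSpace
  have hp' : 0 < p.toReal := hp_toReal_pos hp
  refine ⟨hpol, ?_, ?_⟩
  · -- totally disconnected at 0
    apply Set.eq_singleton_iff_unique_mem.mpr
    refine ⟨mem_connectedComponent, fun v hv => ?_⟩
    have coord : ∀ n : ℕ, ((v : lp (fun _ : ℕ => ℝ) p) : ∀ _ : ℕ, ℝ) n = 0 := by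
      intro n
      obtain ⟨k, hk⟩ := v.2 n
      rcases eq_or_ne (a n) 0 with h0 | h0
      · rw [hk, h0, zero_mul]
      · set g : ↥(A p a) → ℝ := fun w => ((w : lp (fun _ : ℕ => ℝ) p) : ∀ _ : ℕ, ℝ) n with hg
        have hgc : Continuous g := (continuous_apply n).comp
          (lp.uniformContinuous_coe.continuous.comp continuous_subtype_val)
        set t : Set ℝ := g '' connectedComponent (0 : ↥(A p a)) with ht
        have htp : IsPreconnected t :=
          isPreconnected_connectedComponent.image g hgc.continuousOn
        have h0t : (0 : ℝ) ∈ t := ⟨0, mem_connectedComponent, by simp [hg]⟩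
        have hct : g v ∈ t := ⟨v, hv, rfl⟩
        have hsub : ∀ x ∈ t, ∃ m : ℤ, x = a n * m := by
          rintro x ⟨w, -, rfl⟩
          exact w.2 n
        show g v = 0
        by_contra hc
        have hk0 : (k : ℝ) ≠ 0 := by
          intro h
          exact hc (by rw [show g v = a n * k from hk, h, mul_zero])
        have hk1 : (1 : ℝ) ≤ |(k : ℝ)| := by
          have : k ≠ 0 := fun h => hk0 (by simp [h])
          exact_mod_cast Int.one_le_abs this
        have habs : |a n| ≤ |g v| := by
          rw [show g v = a n * k from hk, abs_mul]
          nlinarith [abs_nonneg (a n)]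
        have hanpos : 0 < |a n| := abs_pos.mpr h0
        have hOC : t.OrdConnected := htp.ordConnected
        set x : ℝ := if 0 ≤ g v then |a n| / 2 else -(|a n| / 2) with hx
        have hxt : x ∈ t := by
          rcases le_or_gt 0 (g v) with hge | hlt
          · have hxe : x = |a n| / 2 := if_pos hge
            have hgv : |g v| = g v := abs_of_nonneg hge
            refine hOC.out h0t hct ⟨?_, ?_⟩ <;> rw [hxe] <;> linarith
          · have hxe : x = -(|a n| / 2) := if_neg (not_le.mpr hlt)
            have hgv : |g v| = -g v := abs_of_neg hlt
            refine hOC.out hct h0t ⟨?_, ?_⟩ <;> rw [hxe] <;> linarith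
        obtain ⟨m, hm⟩ := hsub x hxt
        have hxabs : |x| = |a n| / 2 := by
          rcases le_or_gt 0 (g v) with hge | hlt
          · rw [hx, if_pos hge, abs_of_nonneg (by positivity)]
          · rw [hx, if_neg (not_le.mpr hlt), abs_neg, abs_of_nonneg (by positivity)]
        have hxabs' : |x| = |a n| * |(m : ℝ)| := by rw [hm, abs_mul]
        rcases eq_or_ne m 0 with rfl | hm0
        · rw [Int.cast_zero, abs_zero, mul_zero] at hxabs'
          rw [hxabs'] at hxabs
          linarith
        · have hm1 : (1 : ℝ) ≤ |(m : ℝ)| := by exact_mod_cast Int.one_le_abs hm0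
          nlinarith
    have hv0 : (v : lp (fun _ : ℕ => ℝ) p) = 0 :=
      lp.ext (funext fun n => by rw [coord n]; simp)
    exact Subtype.ext (by simpa using hv0)
  · -- not non-archimedean
    intro hNA
    have hUopen : IsOpen {w : ↥(A p a) | ‖(w : lp (fun _ : ℕ => ℝ) p)‖ < 1 / 2} :=
      isOpen_lt (continuous_norm.comp continuous_subtype_val) continuous_const
    have hU : {w : ↥(A p a) | ‖(w : lp (fun _ : ℕ => ℝ) p)‖ < 1 / 2} ∈ 𝓝 (0 : ↥(A p a)) :=
      hUopen.mem_nhds (by simp)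
    obtain ⟨K, hKopen, hKU⟩ := hNA _ hU
    have hKnhds : (K : Set ↥(A p a)) ∈ 𝓝 (0 : ↥(A p a)) := hKopen.mem_nhds K.zero_mem
    obtain ⟨ε, hε, hball⟩ := Metric.mem_nhds_iff.mp hKnhds
    obtain ⟨N, hN⟩ := Metric.tendsto_atTop.mp ha ε hε
    obtain ⟨n, hnsupp, hnN⟩ := hsupp.exists_gt N
    have ha0 : a n ≠ 0 := hnsupp
    have han : |a n| < ε := by
      have := hN n hnN.le
      rwa [Real.dist_eq, sub_zero] at this
    have hanpos : 0 < |a n| := abs_pos.mpr ha0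
    set e : lp (fun _ : ℕ => ℝ) p := lp.single (E := fun _ : ℕ => ℝ) p n (a n) with he_def
    have he : e ∈ A p a := by
      intro m
      rcases eq_or_ne m n with rfl | hm
      · exact ⟨1, by simp [he_def, lp.single_apply_self]⟩
      · exact ⟨0, by simp [he_def, lp.single_apply_ne p n _ hm, Pi.single_apply, hm]⟩
    have hnorme : ‖e‖ = |a n| := by
      have := lp.norm_single (E := fun _ : ℕ => ℝ) (p := p) (zero_lt_one.trans_le Fact.out) n (a n)
      rwa [Real.norm_eq_abs] at this
    set x : ↥(A p a) := ⟨e, he⟩ with hx_def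
    have hxK : x ∈ K := by
      apply hball
      rw [Metric.mem_ball, Subtype.dist_eq]
      simpa [hx_def, hnorme] using han
    set m : ℕ := ⌈1 / (2 * |a n|)⌉₊ with hm_def
    have hyK : m • x ∈ K := nsmul_mem hxK m
    have hyU := hKU hyK
    have hcoe : ((m • x : ↥(A p a)) : lp (fun _ : ℕ => ℝ) p) = (m : ℝ) • e := by
      push_cast
      rw [← Nat.cast_smul_eq_nsmul ℝ m e]
    have hnormy : ‖((m • x : ↥(A p a)) : lp (fun _ : ℕ => ℝ) p)‖ = m * |a n| := by
      rw [hcoe, norm_smul, hnorme, Real.norm_natCast]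
    have hle : (1 : ℝ) / 2 ≤ m * |a n| := by
      have h1 := Nat.le_ceil (1 / (2 * |a n|))
      rw [div_le_iff₀ (by positivity)] at h1
      nlinarith
    have : ‖((m • x : ↥(A p a)) : lp (fun _ : ℕ => ℝ) p)‖ < 1 / 2 := hyU
    rw [hnormy] at this
    linarith
end

section
/- Let G be a TSI Polish group with compatible two-sided invariant metric d_G, and let V ∋ 1_G be an open set witnessing that G is uniformly NSS. Suppose S : G → H is a continuous homomorphism into a TSI Polish group H with metric d_H, and suppose there is k_0 such that for every sequence (g_q) in the ball V_{k_0} = {g : d_G(1_G,g) < 2^{-k_0}}, S(g_q) → 1_H implies g_q → 1_G. Then with U = {g : d_G(1_G,g) < 2^{-k_0-2}}, the restriction S↾cl(U) is a topological embedding and S(cl(U)) is closed in H. -/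
open Filter Topology

/-- Let `G, H` be TSI Polish groups with two-sided invariant metrics, `V` a witness of
uniform NSS for `G`, `S : G → H` a continuous homomorphism, and `k₀` such that for every
sequence `(g_q)` in the ball `V_{k₀} = {g : d(1,g) < 2^{-k₀}}`, `S(g_q) → 1` implies
`g_q → 1`. Then, with `U = {g : d(1,g) < 2^{-k₀-2}}`, the restriction of `S` to the
closure of `U` is a topological embedding and `S(cl U)` is closed in `H`. -/
theorem stmt_18 (G H : Type*)
    [Group G] [MetricSpace G] [IsTopologicalGroup G] [PolishSpace G] [CompleteSpace G]
    [Group H] [MetricSpace H] [IsTopologicalGroup H] [PolishSpace H] [CompleteSpace H]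
    (hGleft : ∀ g h k : G, dist (g * h) (g * k) = dist h k)
    (hGright : ∀ g h k : G, dist (h * g) (k * g) = dist h k)
    (hHleft : ∀ g h k : H, dist (g * h) (g * k) = dist h k)
    (hHright : ∀ g h k : H, dist (h * g) (k * g) = dist h k)
    (V : Set G) (hVopen : IsOpen V) (hV1 : (1 : G) ∈ V)
    (hVnss : ∀ U ∈ 𝓝 (1 : G), ∃ n : ℕ, ∀ g : G, g ∉ U → ∃ m ≤ n, g ^ m ∉ V)
    (S : G →* H) (hS : Continuous S) (k₀ : ℕ)
    (hk₀ : ∀ g : ℕ → G, (∀ q, dist (1 : G) (g q) < 2 ^ (-(k₀ : ℤ))) →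
      Tendsto (fun q => S (g q)) atTop (𝓝 1) → Tendsto g atTop (𝓝 1)) :
    IsEmbedding (fun x : closure {g : G | dist (1 : G) g < 2 ^ (-(k₀ : ℤ) - 2)} => S x) ∧
    IsClosed (S '' closure {g : G | dist (1 : G) g < 2 ^ (-(k₀ : ℤ) - 2)}) := by
  set c : ℝ := 2 ^ (-(k₀ : ℤ) - 2) with hc
  set K : Set G := closure {g : G | dist (1 : G) g < c} with hK
  -- every element of K has distance ≤ c from 1
  have hKbound : ∀ x ∈ K, dist (1 : G) x ≤ c := by
    intro x hx
    have hcl : IsClosed {g : G | dist (1 : G) g ≤ c} :=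
      isClosed_le (continuous_const.dist continuous_id) continuous_const
    exact closure_minimal (fun g (hg : dist (1 : G) g < c) => hg.le) hcl hx
  -- numeric fact
  have hsum : c + c < 2 ^ (-(k₀ : ℤ)) := by
    have h1 : c + c = 2 ^ (-(k₀ : ℤ) - 1) := by
      rw [hc, ← two_mul, show (-(k₀ : ℤ) - 1) = 1 + (-(k₀ : ℤ) - 2) by ring,
        zpow_add₀ (two_ne_zero : (2 : ℝ) ≠ 0)]
      norm_num
    have h2 : (2 : ℝ) ^ (-(k₀ : ℤ) - 1) < 2 ^ (-(k₀ : ℤ)) :=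
      zpow_lt_zpow_right₀ one_lt_two (by omega)
    linarith
  -- translation of the metric
  have hdist : ∀ a b : G, dist (1 : G) (a⁻¹ * b) = dist a b := by
    intro a b
    have h := hGleft a 1 (a⁻¹ * b)
    rw [mul_one, mul_inv_cancel_left] at h
    exact h.symm
  -- key convergence lemma
  have key : ∀ (x : ℕ → G) (a : G), (∀ q, x q ∈ K) → a ∈ K →
      Tendsto (fun q => S (x q)) atTop (𝓝 (S a)) → Tendsto x atTop (𝓝 a) := by
    intro x a hx ha hT
    have hg : ∀ q, dist (1 : G) (a⁻¹ * x q) < 2 ^ (-(k₀ : ℤ)) := by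
      intro q
      rw [hdist]
      calc dist a (x q) ≤ dist a 1 + dist 1 (x q) := dist_triangle a 1 (x q)
        _ ≤ c + c := add_le_add (by rw [dist_comm]; exact hKbound a ha) (hKbound _ (hx q))
        _ < _ := hsum
    have hSg : Tendsto (fun q => S (a⁻¹ * x q)) atTop (𝓝 1) := by
      have h1 : Tendsto (fun q => (S a)⁻¹ * S (x q)) atTop (𝓝 ((S a)⁻¹ * S a)) :=
        tendsto_const_nhds.mul hT
      simpa [map_mul, map_inv] using h1
    have hga := hk₀ _ hg hSg
    have h2 : Tendsto (fun q => a * (a⁻¹ * x q)) atTop (𝓝 (a * 1)) :=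
      tendsto_const_nhds.mul hga
    simpa using h2
  -- injectivity on K
  have hinj : Set.InjOn S K := by
    intro g hg h hh he
    have hlim : Tendsto (fun _ : ℕ => h) atTop (𝓝 g) := by
      refine key (fun _ => h) g (fun _ => hh) hg ?_
      rw [he]
      exact tendsto_const_nhds
    exact tendsto_nhds_unique hlim tendsto_const_nhds
  constructor
  · refine ⟨isInducing_iff_nhds.mpr ?_, fun a b hab => Subtype.ext (hinj a.2 b.2 hab)⟩
    intro x
    refine le_antisymm (((hS.comp continuous_subtype_val).tendsto x).le_comap) ?_
    refine ((Metric.nhds_basis_ball.comap _).le_basis_iff Metric.nhds_basis_ball).mpr ?_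
    intro ε hε
    by_contra hcon
    push_neg at hcon
    have hex : ∀ n : ℕ, ∃ y : K, dist (S (y : G)) (S (x : G)) < 1 / (n + 1) ∧ ¬ dist y x < ε := by
      intro n
      have hsub := hcon (1 / (n + 1)) (by positivity)
      obtain ⟨y, hy1, hy2⟩ := Set.not_subset.mp hsub
      exact ⟨y, by simpa [Metric.mem_ball] using hy1, by simpa [Metric.mem_ball] using hy2⟩
    choose y hy1 hy2 using hex
    have hSy : Tendsto (fun n => S ((y n : G))) atTop (𝓝 (S (x : G))) := by
      rw [tendsto_iff_dist_tendsto_zero]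
      refine squeeze_zero (fun n => dist_nonneg) (fun n => (hy1 n).le) ?_
      exact tendsto_one_div_add_atTop_nhds_zero_nat
    have hyx : Tendsto (fun n => (y n : G)) atTop (𝓝 (x : G)) :=
      key _ _ (fun n => (y n).2) x.2 hSy
    have hd0 : Tendsto (fun n => dist ((y n : G)) (x : G)) atTop (𝓝 0) :=
      tendsto_iff_dist_tendsto_zero.mp hyx
    obtain ⟨n, hn⟩ := (hd0.eventually (gt_mem_nhds hε)).exists
    exact hy2 n (by simpa [Subtype.dist_eq] using hn)
  · refine isClosed_of_closure_subset ?_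
    intro h hh
    obtain ⟨z, hzmem, hz⟩ := mem_closure_iff_seq_limit.mp hh
    choose x hxK hxz using hzmem
    have hcauchy : CauchySeq x := by
      rw [Metric.cauchySeq_iff]
      by_contra hcon
      push_neg at hcon
      obtain ⟨ε, hε, hN⟩ := hcon
      choose p hp q hq hd using hN
      have hg : ∀ i, dist (1 : G) ((x (p i))⁻¹ * x (q i)) < 2 ^ (-(k₀ : ℤ)) := by
        intro i
        rw [hdist]
        calc dist (x (p i)) (x (q i)) ≤ dist (x (p i)) 1 + dist 1 (x (q i)) :=
              dist_triangle _ 1 _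
          _ ≤ c + c := add_le_add (by rw [dist_comm]; exact hKbound _ (hxK _))
              (hKbound _ (hxK _))
          _ < _ := hsum
      have hptop : Tendsto p atTop atTop := tendsto_atTop_mono hp tendsto_id
      have hqtop : Tendsto q atTop atTop := tendsto_atTop_mono hq tendsto_id
      have hzp : Tendsto (fun i => z (p i)) atTop (𝓝 h) := hz.comp hptop
      have hzq : Tendsto (fun i => z (q i)) atTop (𝓝 h) := hz.comp hqtop
      have hSg : Tendsto (fun i => S ((x (p i))⁻¹ * x (q i))) atTop (𝓝 1) := by
        have h1 : Tendsto (fun i => (z (p i))⁻¹ * z (q i)) atTop (𝓝 (h⁻¹ * h)) :=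
          hzp.inv.mul hzq
        simpa [map_mul, map_inv, hxz] using h1
      have hgd := tendsto_iff_dist_tendsto_zero.mp (hk₀ _ hg hSg)
      obtain ⟨i, hi⟩ := (hgd.eventually (gt_mem_nhds hε)).exists
      have : dist ((x (p i))⁻¹ * x (q i)) 1 = dist (x (p i)) (x (q i)) := by
        rw [dist_comm, hdist]
      rw [this] at hi
      exact absurd hi (not_lt.mpr (hd i))
    obtain ⟨a, ha⟩ := cauchySeq_tendsto_of_complete hcauchy
    have haK : a ∈ K := isClosed_closure.mem_of_tendsto ha (Eventually.of_forall hxK)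
    have hSa : Tendsto (fun n => S (x n)) atTop (𝓝 (S a)) := (hS.tendsto a).comp ha
    have hSxz : Tendsto (fun n => S (x n)) atTop (𝓝 h) := by
      simpa [hxz] using hz
    exact ⟨a, haK, tendsto_nhds_unique hSa hSxz⟩
end

section
/- Let G, H be Polish groups with compatible left-invariant metrics, and suppose H is NSS, witnessed by an open set containing no non-trivial subgroups. Let S : G → H be a continuous map with S(1_G) = 1_H such that for all sequences x, y ∈ G^ω, if the partial products (x(0)···x(n)·y(n)^{-1}···y(0)^{-1})_n converge in G then (S(x(0))···S(x(n))·S(y(n))^{-1}···S(y(0))^{-1})_n converge in H. Then the set X = {g ∈ G : S(g^{-1}) = S(g)^{-1}} contains 1_G and there exists r_0 > 0 such that for all g, g' ∈ G with d_G(g,g') < r_0, g ∈ X implies g' ∈ X; consequently the open subgroup generated by {g : d_G(1_G,g) < r_0} is contained in X. -/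
open Filter Topology

/-- The partial product `x(0) ⋯ x(n)`. -/
def partialProd {G : Type*} [Monoid G] (x : ℕ → G) (n : ℕ) : G :=
  ((List.range (n + 1)).map x).prod

lemma pp_zero {M : Type*} [Monoid M] (x : ℕ → M) : partialProd x 0 = x 0 := by
  simp [partialProd, List.range_succ]

lemma pp_succ {M : Type*} [Monoid M] (x : ℕ → M) (n : ℕ) :
    partialProd x (n + 1) = partialProd x n * x (n + 1) := by
  simp [partialProd, List.range_succ, mul_assoc]

lemma pp_one {M : Type*} [Monoid M] (n : ℕ) : partialProd (fun _ => (1 : M)) n = 1 := by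
  induction n with
  | zero => simp [pp_zero]
  | succ n ih => rw [pp_succ, ih, mul_one]

/-- interleave two sequences -/
def ilv {M : Type*} (a b : ℕ → M) (j : ℕ) : M := if j % 2 = 0 then a (j / 2) else b (j / 2)

lemma ilv_even {M : Type*} (a b : ℕ → M) (j : ℕ) : ilv a b (2 * j) = a j := by
  simp [ilv, Nat.mul_div_cancel_left, Nat.mul_mod_right]

lemma ilv_odd {M : Type*} (a b : ℕ → M) (j : ℕ) : ilv a b (2 * j + 1) = b j := by
  have h1 : (2 * j + 1) % 2 = 1 := by omega
  have h2 : (2 * j + 1) / 2 = j := by omega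
  simp [ilv, h1, h2]

lemma pp_ilv_odd {M : Type*} [Monoid M] (a b : ℕ → M) (j : ℕ) :
    partialProd (ilv a b) (2 * j + 1) = partialProd (fun i => a i * b i) j := by
  induction j with
  | zero =>
      rw [show 2 * 0 + 1 = 0 + 1 by ring, pp_succ, pp_zero, pp_zero]
      rw [show (0:ℕ) + 1 = 2 * 0 + 1 by ring, show (0:ℕ) = 2 * 0 by ring, ilv_even, ilv_odd]
  | succ j ih =>
      have e1 : 2 * (j + 1) + 1 = (2 * j + 1) + 1 + 1 := by ring
      rw [e1, pp_succ, pp_succ, ih]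
      rw [show (2 * j + 1) + 1 = 2 * (j+1) by ring, ilv_even,
        show 2 * (j + 1) + 1 = 2 * (j+1) + 1 by ring, ilv_odd, pp_succ, mul_assoc]

lemma pp_ilv_even {M : Type*} [Monoid M] (a b : ℕ → M) (j : ℕ) :
    partialProd (ilv a b) (2 * (j + 1)) = partialProd (fun i => a i * b i) j * a (j + 1) := by
  rw [show 2 * (j + 1) = (2 * j + 1) + 1 by ring, pp_succ, pp_ilv_odd,
    show (2 * j + 1) + 1 = 2 * (j + 1) by ring, ilv_even]

/-- Let `G, H` be Polish groups with compatible left-invariant metrics, `H` NSS witnessed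
by an open set `V` containing no non-trivial subgroup, and `S : G → H` a continuous map
with `S 1 = 1` such that convergence of `(x(0)⋯x(n)·y(n)⁻¹⋯y(0)⁻¹)` implies convergence
of `(S(x(0))⋯S(x(n))·S(y(n))⁻¹⋯S(y(0))⁻¹)`. Then the set
`X = {g : S g⁻¹ = (S g)⁻¹}` contains `1` and there is `r₀ > 0` such that `X` is invariant
under `d_G`-perturbations smaller than `r₀`; consequently the subgroup generated by the
ball `{g : d(1,g) < r₀}` is contained in `X`. -/
theorem stmt_19 (G H : Type*)
    [Group G] [MetricSpace G] [IsTopologicalGroup G] [PolishSpace G]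
    [Group H] [MetricSpace H] [IsTopologicalGroup H] [PolishSpace H]
    (hGleft : ∀ g h k : G, dist (g * h) (g * k) = dist h k)
    (hHleft : ∀ g h k : H, dist (g * h) (g * k) = dist h k)
    (V : Set H) (hVopen : IsOpen V) (hV1 : (1 : H) ∈ V)
    (hVnss : ∀ K : Subgroup H, (K : Set H) ⊆ V → K = ⊥)
    (S : G → H) (hS : Continuous S) (hS1 : S 1 = 1)
    (hhom : ∀ x y : ℕ → G,
      (∃ l : G, Tendsto (fun n => partialProd x n * (partialProd y n)⁻¹) atTop (𝓝 l)) →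
      (∃ l : H, Tendsto
        (fun n => partialProd (fun p => S (x p)) n * (partialProd (fun p => S (y p)) n)⁻¹)
        atTop (𝓝 l))) :
    (1 : G) ∈ {g : G | S g⁻¹ = (S g)⁻¹} ∧
    ∃ r₀ : ℝ, 0 < r₀ ∧
      (∀ g g' : G, dist g g' < r₀ → S g⁻¹ = (S g)⁻¹ → S g'⁻¹ = (S g')⁻¹) ∧
      ((Subgroup.closure {g : G | dist (1 : G) g < r₀} : Subgroup G) : Set G) ⊆
        {g : G | S g⁻¹ = (S g)⁻¹} := by
  -- basic metric facts
  have distG : ∀ a w : G, dist a (a * w) = dist 1 w := by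
    intro a w; simpa using hGleft a 1 w
  have distGinv : ∀ w : G, dist (1 : G) w⁻¹ = dist 1 w := by
    intro w
    have h1 : dist w (1 : G) = dist (1 : G) w⁻¹ := by simpa using hGleft w 1 w⁻¹
    rw [← h1, dist_comm]
  have distHinv : ∀ w : H, dist (1 : H) w⁻¹ = dist 1 w := by
    intro w
    have h1 : dist w (1 : H) = dist (1 : H) w⁻¹ := by simpa using hHleft w 1 w⁻¹
    rw [← h1, dist_comm]
  have distG1 : ∀ a w : G, dist (1 : G) (a⁻¹ * w) = dist a w := by
    intro a w; simpa using (hGleft a 1 (a⁻¹ * w)).symm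
  have distH1 : ∀ a w : H, dist (1 : H) (a⁻¹ * w) = dist a w := by
    intro a w; simpa using (hHleft a 1 (a⁻¹ * w)).symm
  have h1X : S (1 : G)⁻¹ = (S 1)⁻¹ := by rw [inv_one, hS1, inv_one]
  -- the key claim
  have key : ∃ r₀ : ℝ, 0 < r₀ ∧
      ∀ g g' : G, dist g g' < r₀ → S g⁻¹ = (S g)⁻¹ → S g'⁻¹ = (S g')⁻¹ := by
    by_contra hcon
    push_neg at hcon
    obtain ⟨ε, εpos, hball⟩ := Metric.isOpen_iff.mp hVopen 1 hV1
    have hc : ∀ k : ℕ, ∃ p : G × G,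
        dist p.1 p.2 < 1 / (k + 1) ∧ S p.1⁻¹ = (S p.1)⁻¹ ∧ S p.2⁻¹ ≠ (S p.2)⁻¹ := by
      intro k
      obtain ⟨g, g', h1, h2, h3⟩ := hcon (1 / (k + 1)) (by positivity)
      exact ⟨(g, g'), h1, h2, h3⟩
    choose p hd hv hu using hc
    set v : ℕ → G := fun k => (p k).1 with hvdef
    set u : ℕ → G := fun k => (p k).2 with hudef
    -- escaping powers
    have hesc : ∀ k : ℕ, ∃ m : ℕ, 1 ≤ m ∧ ε ≤ dist 1 ((S (u k)⁻¹ * S (u k)) ^ m) := by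
      intro k
      by_contra hno
      push_neg at hno
      set h : H := S (u k)⁻¹ * S (u k) with hh
      have hpow : ∀ m : ℕ, dist (1 : H) (h ^ m) < ε := by
        intro m
        rcases Nat.eq_zero_or_pos m with hm | hm
        · subst hm; simpa using εpos
        · exact hno m hm
      have hsub : (Subgroup.zpowers h : Set H) ⊆ V := by
        rintro w ⟨m, rfl⟩
        apply hball
        rw [Metric.mem_ball, dist_comm]
        rcases m with m | m
        · simpa [zpow_natCast] using hpow m
        · simpa [zpow_negSucc, distHinv] using hpow (m + 1)
      have hbot := hVnss _ hsub
      have : h = 1 := by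
        have := Subgroup.mem_zpowers h
        rw [hbot, Subgroup.mem_bot] at this
        exact this
      exact hu k (eq_inv_of_mul_eq_one_left this)
    choose n hn1 hnε using hesc
    -- block index function
    set N : ℕ → ℕ := fun k => ∑ i ∈ Finset.range k, n i with hN
    have hNsucc : ∀ k, N (k + 1) = N k + n k := by
      intro k; simp [hN, Finset.sum_range_succ]
    have hNmono : Monotone N := by
      intro a b hab
      exact Finset.sum_le_sum_of_subset (Finset.range_subset_range.mpr hab)
    have hNge : ∀ k, k ≤ N k := by
      intro k
      calc k = ∑ _i ∈ Finset.range k, 1 := by simp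
        _ ≤ N k := Finset.sum_le_sum fun i _ => hn1 i
    have hex : ∀ j : ℕ, ∃ k, j < N (k + 1) := by
      intro j; exact ⟨j, lt_of_lt_of_le (Nat.lt_succ_self j) (hNge (j + 1))⟩
    set κ : ℕ → ℕ := fun j => Nat.find (hex j) with hκ
    have hκ1 : ∀ j, j < N (κ j + 1) := fun j => Nat.find_spec (hex j)
    have hκ2 : ∀ j, N (κ j) ≤ j := by
      intro j
      rcases Nat.eq_zero_or_pos (κ j) with h0 | h0
      · rw [h0]; simp [hN]
      · have hfind : Nat.find (hex j) = κ j := rfl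
        have hmin := Nat.find_min (hex j) (m := κ j - 1) (by omega)
        push_neg at hmin
        have e : κ j - 1 + 1 = κ j := by omega
        rwa [e] at hmin
    have hκge : ∀ j k, N k ≤ j → k ≤ κ j := by
      intro j k hk
      by_contra hlt
      push_neg at hlt
      exact absurd (lt_of_lt_of_le (hκ1 j) (hNmono hlt)) (by omega)
    have hκeq : ∀ j k, N k ≤ j → j < N (k + 1) → κ j = k := by
      intro j k h1 h2
      exact le_antisymm (Nat.find_min' (hex j) h2) (hκge j k h1)
    -- the sequences
    set x : ℕ → G := ilv (fun j => (u (κ j))⁻¹) (fun j => u (κ j)) with hx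
    set y : ℕ → G := ilv (fun j => (v (κ j))⁻¹) (fun j => v (κ j)) with hy
    -- partial products on the G side
    have hxodd : ∀ j, partialProd x (2 * j + 1) = 1 := by
      intro j
      rw [hx, pp_ilv_odd]
      rw [show (fun i => (u (κ i))⁻¹ * u (κ i)) = fun _ => (1 : G) from funext fun i => by simp]
      exact pp_one j
    have hyodd : ∀ j, partialProd y (2 * j + 1) = 1 := by
      intro j
      rw [hy, pp_ilv_odd]
      rw [show (fun i => (v (κ i))⁻¹ * v (κ i)) = fun _ => (1 : G) from funext fun i => by simp]
      exact pp_one j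
    have hxeven : ∀ j, partialProd x (2 * j) = (u (κ j))⁻¹ := by
      intro j
      rcases j with _ | j
      · rw [hx, show 2 * 0 = 0 by ring, pp_zero, show (0:ℕ) = 2*0 by ring, ilv_even]
      · rw [hx, pp_ilv_even,
          show (fun i => (u (κ i))⁻¹ * u (κ i)) = fun _ => (1 : G) from funext fun i => by simp,
          pp_one, one_mul]
    have hyeven : ∀ j, partialProd y (2 * j) = (v (κ j))⁻¹ := by
      intro j
      rcases j with _ | j
      · rw [hy, show 2 * 0 = 0 by ring, pp_zero, show (0:ℕ) = 2*0 by ring, ilv_even]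
      · rw [hy, pp_ilv_even,
          show (fun i => (v (κ i))⁻¹ * v (κ i)) = fun _ => (1 : G) from funext fun i => by simp,
          pp_one, one_mul]
    -- G-side convergence to 1
    have hκtend : ∀ K j, N K ≤ j → K ≤ κ j := fun K j => hκge j K
    have hGlim : Tendsto (fun m => partialProd x m * (partialProd y m)⁻¹) atTop (𝓝 (1 : G)) := by
      rw [Metric.tendsto_atTop]
      intro δ hδ
      obtain ⟨K, hK⟩ := exists_nat_one_div_lt hδ
      refine ⟨2 * N K, fun m hm => ?_⟩
      rcases Nat.even_or_odd m with ⟨j, hj⟩ | ⟨j, hj⟩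
      · have hj' : m = 2 * j := by omega
        subst hj'
        rw [hxeven, hyeven, dist_comm]
        have : dist (1 : G) ((u (κ j))⁻¹ * ((v (κ j))⁻¹)⁻¹) = dist (u (κ j)) (v (κ j)) := by
          rw [inv_inv, distG1]
        rw [this, dist_comm]
        have hκj : K ≤ κ j := hκtend K j (by omega)
        have : dist (v (κ j)) (u (κ j)) < 1 / (κ j + 1) := hd (κ j)
        refine lt_of_lt_of_le (lt_of_lt_of_le this ?_) hK.le
        apply one_div_le_one_div_of_le (by positivity)
        have : (K : ℝ) ≤ (κ j : ℝ) := Nat.cast_le.mpr hκj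
        linarith
      · subst hj
        rw [hxodd, hyodd]
        simpa using hδ
    -- apply the hypothesis
    obtain ⟨l, hQ⟩ := hhom x y ⟨1, hGlim⟩
    -- H-side partial products at odd stages
    set A : ℕ → H := fun j => partialProd (fun i => S (u (κ i))⁻¹ * S (u (κ i))) j with hA
    have hSx : (fun m => S (x m)) = ilv (fun j => S (u (κ j))⁻¹) (fun j => S (u (κ j))) := by
      funext m
      rw [hx]
      simp only [ilv, apply_ite S]
    have hSy : (fun m => S (y m)) = ilv (fun j => S (v (κ j))⁻¹) (fun j => S (v (κ j))) := by
      funext m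
      rw [hy]
      simp only [ilv, apply_ite S]
    have hQodd : ∀ j, (partialProd (fun m => S (x m)) (2 * j + 1)) *
        (partialProd (fun m => S (y m)) (2 * j + 1))⁻¹ = A j := by
      intro j
      rw [hSx, hSy, pp_ilv_odd, pp_ilv_odd,
        show (fun i => S (v (κ i))⁻¹ * S (v (κ i))) = fun _ => (1 : H) from
          funext fun i => by rw [hv (κ i)]; exact inv_mul_cancel _,
        pp_one, inv_one, mul_one]
    have hAlim : Tendsto A atTop (𝓝 l) := by
      have hmono : Tendsto (fun j : ℕ => 2 * j + 1) atTop atTop :=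
        tendsto_atTop_atTop.mpr fun b => ⟨b, fun a ha => by omega⟩
      have := hQ.comp hmono
      simp only [Function.comp_def] at this
      refine this.congr fun j => ?_
      exact hQodd j
    -- contradiction from non-Cauchy behaviour
    rw [Metric.tendsto_atTop] at hAlim
    obtain ⟨J, hJ⟩ := hAlim (ε / 2) (by linarith)
    set k := J + 1 with hk
    have hNk1 : J + 1 ≤ N k := hNge k
    have hAsucc : ∀ j, A (j + 1) = A j * (S (u (κ (j + 1)))⁻¹ * S (u (κ (j + 1)))) :=
      fun j => pp_succ _ j
    have hstep : ∀ t, t ≤ n k →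
        A (N k - 1 + t) = A (N k - 1) * (S (u k)⁻¹ * S (u k)) ^ t := by
      intro t ht
      induction t with
      | zero => simp
      | succ t ih =>
          have e : N k - 1 + (t + 1) = (N k - 1 + t) + 1 := by omega
          rw [e, hAsucc, ih (by omega)]
          have hκk : κ (N k - 1 + t + 1) = k := by
            have hs := hNsucc k
            apply hκeq <;> omega
          rw [hκk, pow_succ, mul_assoc]
    have hdist : dist (A (N k - 1)) (A (N k - 1 + n k)) =
        dist (1 : H) ((S (u k)⁻¹ * S (u k)) ^ n k) := by
      rw [hstep (n k) le_rfl]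
      simpa using hHleft (A (N k - 1)) 1 ((S (u k)⁻¹ * S (u k)) ^ n k)
    have h1 := hJ (N k - 1) (by omega)
    have h2 := hJ (N k - 1 + n k) (by omega)
    have h3 : dist (A (N k - 1)) (A (N k - 1 + n k)) < ε :=
      calc dist (A (N k - 1)) (A (N k - 1 + n k))
          ≤ dist (A (N k - 1)) l + dist l (A (N k - 1 + n k)) := dist_triangle _ _ _
        _ < ε / 2 + ε / 2 := by rw [dist_comm l]; exact add_lt_add h1 h2
        _ = ε := by ring
    rw [hdist] at h3
    exact absurd (hnε k) (not_le.mpr h3)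
  -- conclude
  obtain ⟨r₀, hr₀, hkey⟩ := key
  refine ⟨h1X, r₀, hr₀, hkey, ?_⟩
  intro g hg
  refine Subgroup.closure_induction_right (p := fun w _ => S w⁻¹ = (S w)⁻¹) h1X ?_ ?_ hg
  · intro a _ w hw ha
    exact hkey a (a * w) (by rw [distG]; exact hw) ha
  · intro a _ w hw ha
    refine hkey a (a * w⁻¹) ?_ ha
    rw [distG, distGinv]
    exact hw
end
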